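/- arXiv:1907.03265 — 2 statements merged into one kernel-verified Lean document; each statement's English description precedes it below -/
import Mathlib

section
/- Soundness of TDS with respect to utilitarian frames: for every formula φ of L_TDS, if ⊢_TDS φ then φ is valid on every TUS-model (under the dominance-based satisfaction clause for each deontic operator ⊗_i). -/
/-! # Temporal Deontic STIT logic (TDS) — common definitions -/

/-- Formulas of the language L_TDS over a set `Ag` of agents, with propositional
variables indexed by `ℕ`. -/
inductive Formula (Ag : Type) : Type
  | var : ℕ → Formula Ag
  | neg : Formula Ag → Formula Ag
  | and : Formula Ag → Formula Ag → Formula Ag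
  | box : Formula Ag → Formula Ag            -- □
  | agent : Ag → Formula Ag → Formula Ag     -- [i]
  | coal : Formula Ag → Formula Ag           -- [Ag]
  | G : Formula Ag → Formula Ag
  | H : Formula Ag → Formula Ag
  | obl : Ag → Formula Ag → Formula Ag       -- ⊗_i

namespace Formula

variable {Ag : Type}

def impl (φ ψ : Formula Ag) : Formula Ag := neg (and φ (neg ψ))
def orf (φ ψ : Formula Ag) : Formula Ag := neg (and (neg φ) (neg ψ))
def diam (φ : Formula Ag) : Formula Ag := neg (box (neg φ))              -- ◇
def diamAg (i : Ag) (φ : Formula Ag) : Formula Ag := neg (agent i (neg φ)) -- ⟨i⟩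
def diamCoal (φ : Formula Ag) : Formula Ag := neg (coal (neg φ))         -- ⟨Ag⟩
def F (φ : Formula Ag) : Formula Ag := neg (G (neg φ))
def P (φ : Formula Ag) : Formula Ag := neg (H (neg φ))
def perm (i : Ag) (φ : Formula Ag) : Formula Ag := neg (obl i (neg φ))   -- ⊖_i
def bot : Formula Ag := and (var 0) (neg (var 0))
def verum : Formula Ag := neg bot

/-- name(p) := □¬p ∧ □(Gp ∧ Hp) -/
def nameF (p : ℕ) : Formula Ag :=
  and (box (neg (var p))) (box (and (G (var p)) (H (var p))))

/-- The propositional variable `p` occurs in the formula. -/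
def occurs (p : ℕ) : Formula Ag → Prop
  | var q => p = q
  | neg φ => occurs p φ
  | and φ ψ => occurs p φ ∨ occurs p ψ
  | box φ => occurs p φ
  | agent _ φ => occurs p φ
  | coal φ => occurs p φ
  | G φ => occurs p φ
  | H φ => occurs p φ
  | obl _ φ => occurs p φ

/-- Propositional (Boolean) evaluation of a formula, treating every formula whose
main connective is not `neg` or `and` as an atom valued by `v`. -/
def evalProp (v : Formula Ag → Bool) : Formula Ag → Bool
  | neg φ => ! evalProp v φ
  | and φ ψ => evalProp v φ && evalProp v ψ
  | φ => v φ

/-- φ is a propositional tautology. -/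
def Tautology (φ : Formula Ag) : Prop := ∀ v : Formula Ag → Bool, evalProp v φ = true

/-- Finite conjunction. -/
def bigAnd (l : List (Formula Ag)) : Formula Ag := l.foldr and verum

end Formula

/-- A fixed enumeration of the (finitely many) agents. -/
noncomputable def agList (Ag : Type) [Fintype Ag] : List Ag := Finset.univ.toList

open Formula in
/-- The Hilbert system TDS. -/
inductive Prv {Ag : Type} [Fintype Ag] : Formula Ag → Prop
  | taut {φ : Formula Ag} : Tautology φ → Prv φ
  -- S5 for □
  | kBox (φ ψ : Formula Ag) : Prv (impl (box (impl φ ψ)) (impl (box φ) (box ψ)))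
  | tBox (φ : Formula Ag) : Prv (impl (box φ) φ)
  | fiveBox (φ : Formula Ag) : Prv (impl (diam φ) (box (diam φ)))
  -- S5 for each [i]
  | kAg (i : Ag) (φ ψ : Formula Ag) :
      Prv (impl (agent i (impl φ ψ)) (impl (agent i φ) (agent i ψ)))
  | tAg (i : Ag) (φ : Formula Ag) : Prv (impl (agent i φ) φ)
  | fiveAg (i : Ag) (φ : Formula Ag) : Prv (impl (diamAg i φ) (agent i (diamAg i φ)))
  -- S5 for [Ag]
  | kCoal (φ ψ : Formula Ag) : Prv (impl (coal (impl φ ψ)) (impl (coal φ) (coal ψ)))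
  | tCoal (φ : Formula Ag) : Prv (impl (coal φ) φ)
  | fiveCoal (φ : Formula Ag) : Prv (impl (diamCoal φ) (coal (diamCoal φ)))
  -- A10 independence of agents
  | a10 (φs : Ag → Formula Ag) :
      Prv (impl (bigAnd ((agList Ag).map (fun i => diam (agent i (φs i)))))
                (diam (bigAnd ((agList Ag).map (fun i => agent i (φs i))))))
  -- A11
  | a11 (φs : Ag → Formula Ag) :
      Prv (impl (bigAnd ((agList Ag).map (fun i => agent i (φs i))))
                (coal (bigAnd ((agList Ag).map (fun i => φs i)))))
  -- A12 K for ⊗_i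
  | a12 (i : Ag) (φ ψ : Formula Ag) :
      Prv (impl (obl i (impl φ ψ)) (impl (obl i φ) (obl i ψ)))
  -- A13
  | a13 (i : Ag) (φ : Formula Ag) : Prv (impl (box φ) (and (agent i φ) (obl i φ)))
  -- A14
  | a14 (i : Ag) (φ : Formula Ag) : Prv (impl (obl i φ) (diam (agent i φ)))
  -- A15
  | a15 (i : Ag) (φ : Formula Ag) : Prv (impl (diam (obl i φ)) (box (obl i φ)))
  -- A16
  | a16 (i : Ag) (φ ψ : Formula Ag) :
      Prv (impl (box (impl (agent i φ) (agent i ψ))) (impl (obl i φ) (obl i ψ)))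
  -- KD4 for G
  | kG (φ ψ : Formula Ag) : Prv (impl (G (impl φ ψ)) (impl (G φ) (G ψ)))
  | fourG (φ : Formula Ag) : Prv (impl (G φ) (G (G φ)))
  | dG (φ : Formula Ag) : Prv (impl (G φ) (F φ))
  -- K for H
  | kH (φ ψ : Formula Ag) : Prv (impl (H (impl φ ψ)) (impl (H φ) (H ψ)))
  -- A21 - A25
  | a21 (φ : Formula Ag) : Prv (impl φ (G (P φ)))
  | a22 (φ : Formula Ag) : Prv (impl φ (H (F φ)))
  | a23 (φ : Formula Ag) : Prv (impl (F (P φ)) (orf (P φ) (orf φ (F φ))))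
  | a24 (φ : Formula Ag) : Prv (impl (P (F φ)) (orf (P φ) (orf φ (F φ))))
  | a25 (φ : Formula Ag) : Prv (impl (F (diam φ)) (diamCoal (F φ)))
  -- rules
  | mp {φ ψ : Formula Ag} : Prv (impl φ ψ) → Prv φ → Prv ψ
  | necBox {φ : Formula Ag} : Prv φ → Prv (box φ)
  | necG {φ : Formula Ag} : Prv φ → Prv (G φ)
  | necH {φ : Formula Ag} : Prv φ → Prv (H φ)
  | r2 {φ : Formula Ag} (p : ℕ) : ¬ occurs p φ → Prv (impl (nameF p) φ) → Prv φ

/-- Derivability from a set of premises (Def. 4.4 of Blackburn–de Rijke–Venema). -/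
def SetProv {Ag : Type} [Fintype Ag] (Γ : Set (Formula Ag)) (φ : Formula Ag) : Prop :=
  ∃ l : List (Formula Ag), (∀ ψ ∈ l, ψ ∈ Γ) ∧ Prv (l.foldr Formula.impl φ)

/-- Maximally consistent set. -/
def MCS {Ag : Type} [Fintype Ag] (Γ : Set (Formula Ag)) : Prop :=
  ¬ SetProv Γ Formula.bot ∧ ∀ Γ' : Set (Formula Ag), Γ ⊂ Γ' → SetProv Γ' Formula.bot

/-- The members of `Boxes`. -/
inductive BoxOp (Ag : Type) : Type
  | box : BoxOp Ag
  | coal : BoxOp Ag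
  | G : BoxOp Ag
  | H : BoxOp Ag
  | agent : Ag → BoxOp Ag
  | obl : Ag → BoxOp Ag

/-- Applying a box operator to a formula. -/
def BoxOp.apply {Ag : Type} : BoxOp Ag → Formula Ag → Formula Ag
  | .box, φ => .box φ
  | .coal, φ => .coal φ
  | .G, φ => .G φ
  | .H, φ => .H φ
  | .agent i, φ => .agent i φ
  | .obl i, φ => .obl i φ

/-- The dual diamond ⟨α⟩ of a box operator [α]. -/
def BoxOp.dual {Ag : Type} (α : BoxOp Ag) (φ : Formula Ag) : Formula Ag :=
  .neg (α.apply (.neg φ))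

/-- Canonical relation: R^dt_[α] Γ Δ iff {φ : [α]φ ∈ Γ} ⊆ Δ. -/
def canR {Ag : Type} (α : BoxOp Ag) (Γ Δ : Set (Formula Ag)) : Prop :=
  ∀ φ : Formula Ag, α.apply φ ∈ Γ → φ ∈ Δ

/-- Zig-zagging formula ⟨α₁⟩(φ₁ ∧ ⟨α₂⟩(φ₂ ∧ … ∧ ⟨αₙ⟩φₙ)…), where `l` lists the
outer pairs (αₖ, φₖ) for k < n and `(α, φ)` is the innermost pair (αₙ, φₙ). -/
def zigzag {Ag : Type} (l : List (BoxOp Ag × Formula Ag)) (α : BoxOp Ag)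
    (φ : Formula Ag) : Formula Ag :=
  l.foldr (fun p acc => p.1.dual (Formula.and p.2 acc)) (α.dual φ)

/-- IRR-theories. -/
def IRRTheory {Ag : Type} [Fintype Ag] (Γ : Set (Formula Ag)) : Prop :=
  MCS Γ ∧ (∃ p : ℕ, Formula.nameF p ∈ Γ) ∧
    ∀ (l : List (BoxOp Ag × Formula Ag)) (α : BoxOp Ag) (φ : Formula Ag),
      zigzag l α φ ∈ Γ → ∃ q : ℕ, zigzag l α (Formula.and φ (Formula.nameF q)) ∈ Γ

/-- Diamond saturated set of MCSs. -/
def DiamondSaturated {Ag : Type} (X : Set (Set (Formula Ag))) : Prop :=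
  ∀ Γ ∈ X, ∀ (α : BoxOp Ag) (φ : Formula Ag), α.dual φ ∈ Γ →
    ∃ Δ ∈ X, canR α Γ Δ ∧ φ ∈ Δ

/-- The relational frame conditions of a TDS-frame. -/
structure IsTDSFrame (Ag W : Type) (Rbox : W → W → Prop) (Rag : Ag → W → W → Prop)
    (Rcoal : W → W → Prop) (RG : W → W → Prop) (RH : W → W → Prop)
    (Robl : Ag → W → W → Prop) : Prop where
  nonempty : Nonempty W
  box_equiv : Equivalence Rbox
  ag_equiv : ∀ i : Ag, Equivalence (Rag i)
  coal_equiv : Equivalence Rcoal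
  c1 : ∀ (i : Ag) (w v : W), Rag i w v → Rbox w v
  c2 : ∀ u : Ag → W, (∀ i j : Ag, Rbox (u i) (u j)) → ∃ v : W, ∀ i : Ag, Rag i (u i) v
  c3 : ∀ w v : W, Rcoal w v → ∀ i : Ag, Rag i w v
  g_trans : ∀ w u v : W, RG w u → RG u v → RG w v
  g_serial : ∀ w : W, ∃ v : W, RG w v
  h_conv : ∀ w v : W, RH w v ↔ RG v w
  t4 : ∀ w u v : W, RG w u → RG w v → RG u v ∨ u = v ∨ RG v u
  t5 : ∀ w u v : W, RH w u → RH w v → RH u v ∨ u = v ∨ RH v u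
  t6 : ∀ w u v : W, RG w u → Rbox u v → ∃ z : W, Rcoal w z ∧ RG z v
  t7 : ∀ w u : W, Rbox w u → ¬ RG w u
  d8 : ∀ (i : Ag) (w v : W), Robl i w v → Rbox w v
  d9 : ∀ (i : Ag) (w : W), ∃ v : W, Rbox w v ∧ ∀ u : W, Rag i v u → Robl i w u
  d10 : ∀ (i : Ag) (w v u z : W), Rbox w v → Rbox w u → Robl i u z → Robl i v z
  d11 : ∀ (i : Ag) (w v : W), Robl i w v →
      ∃ u : W, Rbox w u ∧ Rag i u v ∧ ∀ z : W, Rag i u z → Robl i w z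

/-- The relational frame conditions of a TUS-frame (the non-deontic part of a
TDS-frame). -/
structure IsTUSFrame (Ag W : Type) (Rbox : W → W → Prop) (Rag : Ag → W → W → Prop)
    (Rcoal : W → W → Prop) (RG : W → W → Prop) (RH : W → W → Prop) : Prop where
  nonempty : Nonempty W
  box_equiv : Equivalence Rbox
  ag_equiv : ∀ i : Ag, Equivalence (Rag i)
  coal_equiv : Equivalence Rcoal
  c1 : ∀ (i : Ag) (w v : W), Rag i w v → Rbox w v
  c2 : ∀ u : Ag → W, (∀ i j : Ag, Rbox (u i) (u j)) → ∃ v : W, ∀ i : Ag, Rag i (u i) v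
  c3 : ∀ w v : W, Rcoal w v → ∀ i : Ag, Rag i w v
  g_trans : ∀ w u v : W, RG w u → RG u v → RG w v
  g_serial : ∀ w : W, ∃ v : W, RG w v
  h_conv : ∀ w v : W, RH w v ↔ RG v w
  t4 : ∀ w u v : W, RG w u → RG w v → RG u v ∨ u = v ∨ RG v u
  t5 : ∀ w u v : W, RH w u → RH w v → RH u v ∨ u = v ∨ RH v u
  t6 : ∀ w u v : W, RG w u → Rbox u v → ∃ z : W, Rcoal w z ∧ RG z v
  t7 : ∀ w u : W, Rbox w u → ¬ RG w u

/-- A (bare) relational Kripke model for the language L_TDS. -/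
structure KModel (Ag : Type) where
  W : Type
  Rbox : W → W → Prop
  Rag : Ag → W → W → Prop
  Rcoal : W → W → Prop
  RG : W → W → Prop
  RH : W → W → Prop
  Robl : Ag → W → W → Prop
  val : ℕ → W → Prop

/-- Standard Kripke satisfaction. -/
def KModel.sat {Ag : Type} (M : KModel Ag) : Formula Ag → M.W → Prop
  | .var p, w => M.val p w
  | .neg φ, w => ¬ M.sat φ w
  | .and φ ψ, w => M.sat φ w ∧ M.sat ψ w
  | .box φ, w => ∀ u : M.W, M.Rbox w u → M.sat φ u
  | .agent i φ, w => ∀ u : M.W, M.Rag i w u → M.sat φ u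
  | .coal φ, w => ∀ u : M.W, M.Rcoal w u → M.sat φ u
  | .G φ, w => ∀ u : M.W, M.RG w u → M.sat φ u
  | .H φ, w => ∀ u : M.W, M.RH w u → M.sat φ u
  | .obl i φ, w => ∀ u : M.W, M.Robl i w u → M.sat φ u

/-- A TDS-model: a Kripke model whose frame is a TDS-frame. -/
structure TDSModel (Ag : Type) extends KModel Ag where
  frame : IsTDSFrame Ag W Rbox Rag Rcoal RG RH Robl

/-- Satisfaction on TDS-models. -/
abbrev TDSModel.sat {Ag : Type} (M : TDSModel Ag) : Formula Ag → M.W → Prop :=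
  M.toKModel.sat

/-- The canonical model with domain restricted to a set `X` of theories. -/
def canonicalModel (Ag : Type) (X : Set (Set (Formula Ag))) : KModel Ag where
  W := X
  Rbox Γ Δ := canR BoxOp.box Γ.1 Δ.1
  Rag i Γ Δ := canR (BoxOp.agent i) Γ.1 Δ.1
  Rcoal Γ Δ := canR BoxOp.coal Γ.1 Δ.1
  RG Γ Δ := canR BoxOp.G Γ.1 Δ.1
  RH Γ Δ := canR BoxOp.H Γ.1 Δ.1
  Robl i Γ Δ := canR (BoxOp.obl i) Γ.1 Δ.1
  val p Γ := Formula.var p ∈ Γ.1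

/-- A temporal utilitarian STIT model (TUS-model). -/
structure TUSModel (Ag : Type) where
  W : Type
  Rbox : W → W → Prop
  Rag : Ag → W → W → Prop
  Rcoal : W → W → Prop
  RG : W → W → Prop
  RH : W → W → Prop
  util : W → ℕ
  val : ℕ → W → Prop
  frame : IsTUSFrame Ag W Rbox Rag Rcoal RG RH

namespace TUSModel

variable {Ag : Type}

/-- The moment R_□(w). -/
def mom (M : TUSModel Ag) (w : M.W) : Set M.W := {u | M.Rbox w u}

/-- The choice cell R_[i](v). -/
def cell (M : TUSModel Ag) (i : Ag) (v : M.W) : Set M.W := {u | M.Rag i v u}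

/-- The state R^s_[i](v) := ⋂_{k ≠ i} R_[k](v). -/
def state (M : TUSModel Ag) (i : Ag) (v : M.W) : Set M.W :=
  {u | ∀ k : Ag, k ≠ i → M.Rag k v u}

/-- Weak preference ≤ between sets of worlds. -/
def pref (M : TUSModel Ag) (A B : Set M.W) : Prop :=
  ∀ a ∈ A, ∀ b ∈ B, M.util a ≤ M.util b

/-- Weak dominance ⪯ between sets of worlds, relative to the moment of `w`:
for every state included in the moment R_□(w), the restriction of `A` is weakly
preferred to the restriction of `B`. -/
def dom (M : TUSModel Ag) (i : Ag) (w : M.W) (A B : Set M.W) : Prop :=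
  ∀ x : M.W, M.state i x ⊆ M.mom w → M.pref (A ∩ M.state i x) (B ∩ M.state i x)

/-- Strict dominance ≺. -/
def sdom (M : TUSModel Ag) (i : Ag) (w : M.W) (A B : Set M.W) : Prop :=
  M.dom i w A B ∧ ¬ M.dom i w B A

/-- Satisfaction on TUS-models, with the dominance-based clause for ⊗_i. -/
def sat (M : TUSModel Ag) : Formula Ag → M.W → Prop
  | .var p, w => M.val p w
  | .neg φ, w => ¬ M.sat φ w
  | .and φ ψ, w => M.sat φ w ∧ M.sat ψ w
  | .box φ, w => ∀ u : M.W, M.Rbox w u → M.sat φ u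
  | .agent i φ, w => ∀ u : M.W, M.Rag i w u → M.sat φ u
  | .coal φ, w => ∀ u : M.W, M.Rcoal w u → M.sat φ u
  | .G φ, w => ∀ u : M.W, M.RG w u → M.sat φ u
  | .H φ, w => ∀ u : M.W, M.RH w u → M.sat φ u
  | .obl i φ, w =>
      ∀ v : M.W, M.cell i v ⊆ M.mom w → ¬ (M.cell i v ⊆ {u : M.W | M.sat φ u}) →
        ∃ z : M.W, M.cell i z ⊆ M.mom w ∧
          M.sdom i w (M.cell i v) (M.cell i z) ∧
          M.cell i z ⊆ {u : M.W | M.sat φ u} ∧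
          ∀ x : M.W, M.cell i x ⊆ M.mom w →
            M.dom i w (M.cell i z) (M.cell i x) → M.cell i x ⊆ {u : M.W | M.sat φ u}

end TUSModel

/-- Replacing the deontic relations of a TDS-model by a utility function yields
a TUS-model over the same worlds, relations and valuation. -/
def TDSModel.toTUS {Ag : Type} (M : TDSModel Ag) (util : M.W → ℕ) : TUSModel Ag where
  W := M.W
  Rbox := M.Rbox
  Rag := M.Rag
  Rcoal := M.Rcoal
  RG := M.RG
  RH := M.RH
  util := util
  val := M.val
  frame :=
    { nonempty := M.frame.nonempty
      box_equiv := M.frame.box_equiv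
      ag_equiv := M.frame.ag_equiv
      coal_equiv := M.frame.coal_equiv
      c1 := M.frame.c1
      c2 := M.frame.c2
      c3 := M.frame.c3
      g_trans := M.frame.g_trans
      g_serial := M.frame.g_serial
      h_conv := M.frame.h_conv
      t4 := M.frame.t4
      t5 := M.frame.t5
      t6 := M.frame.t6
      t7 := M.frame.t7 }

section Soundness

namespace TUSModel

variable {Ag : Type}

/- Basic satisfaction lemmas for the defined connectives. -/

lemma sat_neg (M : TUSModel Ag) {φ : Formula Ag} {w : M.W} :
    M.sat (.neg φ) w ↔ ¬ M.sat φ w := Iff.rfl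

lemma sat_and (M : TUSModel Ag) {φ ψ : Formula Ag} {w : M.W} :
    M.sat (.and φ ψ) w ↔ M.sat φ w ∧ M.sat ψ w := Iff.rfl

lemma sat_impl (M : TUSModel Ag) {φ ψ : Formula Ag} {w : M.W} :
    M.sat (Formula.impl φ ψ) w ↔ (M.sat φ w → M.sat ψ w) := by
  show ¬ (M.sat φ w ∧ ¬ M.sat ψ w) ↔ _
  tauto

lemma sat_orf (M : TUSModel Ag) {φ ψ : Formula Ag} {w : M.W} :
    M.sat (Formula.orf φ ψ) w ↔ (M.sat φ w ∨ M.sat ψ w) := by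
  show ¬ (¬ M.sat φ w ∧ ¬ M.sat ψ w) ↔ _
  tauto

lemma sat_diam (M : TUSModel Ag) {φ : Formula Ag} {w : M.W} :
    M.sat (Formula.diam φ) w ↔ ∃ u, M.Rbox w u ∧ M.sat φ u := by
  constructor
  · intro h
    by_contra hc
    push_neg at hc
    exact h fun u hu => hc u hu
  · rintro ⟨u, hu, hs⟩ hall
    exact hall u hu hs

lemma sat_diamAg (M : TUSModel Ag) {i : Ag} {φ : Formula Ag} {w : M.W} :
    M.sat (Formula.diamAg i φ) w ↔ ∃ u, M.Rag i w u ∧ M.sat φ u := by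
  constructor
  · intro h
    by_contra hc
    push_neg at hc
    exact h fun u hu => hc u hu
  · rintro ⟨u, hu, hs⟩ hall
    exact hall u hu hs

lemma sat_diamCoal (M : TUSModel Ag) {φ : Formula Ag} {w : M.W} :
    M.sat (Formula.diamCoal φ) w ↔ ∃ u, M.Rcoal w u ∧ M.sat φ u := by
  constructor
  · intro h
    by_contra hc
    push_neg at hc
    exact h fun u hu => hc u hu
  · rintro ⟨u, hu, hs⟩ hall
    exact hall u hu hs

lemma sat_F (M : TUSModel Ag) {φ : Formula Ag} {w : M.W} :
    M.sat (Formula.F φ) w ↔ ∃ u, M.RG w u ∧ M.sat φ u := by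
  constructor
  · intro h
    by_contra hc
    push_neg at hc
    exact h fun u hu => hc u hu
  · rintro ⟨u, hu, hs⟩ hall
    exact hall u hu hs

lemma sat_P (M : TUSModel Ag) {φ : Formula Ag} {w : M.W} :
    M.sat (Formula.P φ) w ↔ ∃ u, M.RH w u ∧ M.sat φ u := by
  constructor
  · intro h
    by_contra hc
    push_neg at hc
    exact h fun u hu => hc u hu
  · rintro ⟨u, hu, hs⟩ hall
    exact hall u hu hs

lemma sat_bigAnd (M : TUSModel Ag) (l : List (Formula Ag)) (w : M.W) :
    M.sat (Formula.bigAnd l) w ↔ ∀ ψ ∈ l, M.sat ψ w := by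
  induction l with
  | nil =>
      constructor
      · intro _ ψ h
        exact absurd h (List.not_mem_nil (a := ψ))
      · intro _ h
        exact h.2 h.1
  | cons a l ih =>
      show M.sat a w ∧ M.sat (Formula.bigAnd l) w ↔ _
      simp [ih]

lemma sat_of_tautology (M : TUSModel Ag) {φ : Formula Ag} (h : Formula.Tautology φ)
    (w : M.W) : M.sat φ w := by
  classical
  have key : ∀ ψ : Formula Ag,
      Formula.evalProp (fun χ => decide (M.sat χ w)) ψ = true ↔ M.sat ψ w := by
    intro ψ
    induction ψ with
    | neg φ ih =>
        rw [M.sat_neg, ← ih]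
        simp [Formula.evalProp]
    | and φ ψ ih1 ih2 =>
        rw [M.sat_and, ← ih1, ← ih2]
        simp [Formula.evalProp]
    | var p => simp [Formula.evalProp]
    | box φ _ => simp [Formula.evalProp]
    | agent i φ _ => simp [Formula.evalProp]
    | coal φ _ => simp [Formula.evalProp]
    | G φ _ => simp [Formula.evalProp]
    | H φ _ => simp [Formula.evalProp]
    | obl i φ _ => simp [Formula.evalProp]
  exact (key φ).mp (h _)

/- Basic facts about moments, cells and states. -/

lemma mem_cell_self (M : TUSModel Ag) (i : Ag) (v : M.W) : v ∈ M.cell i v :=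
  (M.frame.ag_equiv i).refl v

lemma mem_state_self (M : TUSModel Ag) (i : Ag) (x : M.W) : x ∈ M.state i x :=
  fun k _ => (M.frame.ag_equiv k).refl x

lemma cell_self_subset_mom (M : TUSModel Ag) (i : Ag) (w : M.W) :
    M.cell i w ⊆ M.mom w := fun u hu => M.frame.c1 i w u hu

lemma mom_eq_of_rbox (M : TUSModel Ag) {w u : M.W} (h : M.Rbox w u) :
    M.mom w = M.mom u :=
  Set.ext fun x =>
    ⟨fun hx => M.frame.box_equiv.trans (M.frame.box_equiv.symm h) hx,
     fun hx => M.frame.box_equiv.trans h hx⟩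

/-- Independence of agents: a choice cell and a state inside the same moment
always intersect. -/
lemma cell_inter_state_nonempty (M : TUSModel Ag) {i : Ag} {w : M.W} (v x : M.W)
    (hv : M.cell i v ⊆ M.mom w) (hx : M.state i x ⊆ M.mom w) :
    ∃ y, y ∈ M.cell i v ∧ y ∈ M.state i x := by
  classical
  have hbv : M.Rbox w v := hv (M.mem_cell_self i v)
  have hbx : M.Rbox w x := hx (M.mem_state_self i x)
  have h1 : ∀ k : Ag, M.Rbox w (if k = i then v else x) := by
    intro k
    by_cases h : k = i <;> simp [h, hbv, hbx]
  obtain ⟨y, hy⟩ := M.frame.c2 (fun k => if k = i then v else x)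
    (fun k j => M.frame.box_equiv.trans (M.frame.box_equiv.symm (h1 k)) (h1 j))
  refine ⟨y, ?_, ?_⟩
  · show M.Rag i v y
    simpa using hy i
  · intro k hk
    show M.Rag k x y
    simpa [hk] using hy k

lemma dom_trans (M : TUSModel Ag) {i : Ag} {w : M.W} {A C : Set M.W} {z : M.W}
    (hz : M.cell i z ⊆ M.mom w) (h1 : M.dom i w A (M.cell i z))
    (h2 : M.dom i w (M.cell i z) C) : M.dom i w A C := by
  intro x hx a ha c hc
  obtain ⟨y, hy1, hy2⟩ := M.cell_inter_state_nonempty z x hz hx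
  exact le_trans (h1 x hx a ha y ⟨hy1, hy2⟩) (h2 x hx y ⟨hy1, hy2⟩ c hc)

/-- The dominance-ought clause, abstracted over the truth set. -/
def Oc (M : TUSModel Ag) (i : Ag) (w : M.W) (S : Set M.W) : Prop :=
  ∀ v : M.W, M.cell i v ⊆ M.mom w → ¬ (M.cell i v ⊆ S) →
    ∃ z : M.W, M.cell i z ⊆ M.mom w ∧
      M.sdom i w (M.cell i v) (M.cell i z) ∧
      M.cell i z ⊆ S ∧
      ∀ x : M.W, M.cell i x ⊆ M.mom w →
        M.dom i w (M.cell i z) (M.cell i x) → M.cell i x ⊆ S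

lemma sat_obl (M : TUSModel Ag) {i : Ag} {φ : Formula Ag} {w : M.W} :
    M.sat (.obl i φ) w ↔ M.Oc i w {u : M.W | M.sat φ u} := Iff.rfl

lemma Oc_cellmono (M : TUSModel Ag) {i : Ag} {w : M.W} {S T : Set M.W}
    (hST : ∀ v, M.cell i v ⊆ M.mom w → M.cell i v ⊆ S → M.cell i v ⊆ T)
    (h : M.Oc i w S) : M.Oc i w T := by
  intro v hv hvT
  obtain ⟨z, hz, hsd, hzS, h3⟩ := h v hv fun hvS => hvT (hST v hv hvS)
  exact ⟨z, hz, hsd, hST z hz hzS, fun x hx hd => hST x hx (h3 x hx hd)⟩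

lemma Oc_mono (M : TUSModel Ag) {i : Ag} {w : M.W} {S T : Set M.W}
    (hST : S ⊆ T) (h : M.Oc i w S) : M.Oc i w T :=
  M.Oc_cellmono (fun _ _ hsub => hsub.trans hST) h

lemma Oc_of_mom_subset (M : TUSModel Ag) {i : Ag} {w : M.W} {S : Set M.W}
    (h : M.mom w ⊆ S) : M.Oc i w S :=
  fun _ hv hvS => absurd (hv.trans h) hvS

lemma Oc_inter_aux (M : TUSModel Ag) {i : Ag} {w : M.W} {S T : Set M.W}
    (hS : M.Oc i w S) (hT : M.Oc i w T) {v : M.W} (hv : M.cell i v ⊆ M.mom w)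
    (hvS : ¬ (M.cell i v ⊆ S)) :
    ∃ z : M.W, M.cell i z ⊆ M.mom w ∧
      M.sdom i w (M.cell i v) (M.cell i z) ∧
      M.cell i z ⊆ S ∩ T ∧
      ∀ x : M.W, M.cell i x ⊆ M.mom w →
        M.dom i w (M.cell i z) (M.cell i x) → M.cell i x ⊆ S ∩ T := by
  classical
  obtain ⟨z, hzm, ⟨hdvz, hndzv⟩, hzS, hz3⟩ := hS v hv hvS
  by_cases hzT : M.cell i z ⊆ T
  · by_cases hall : ∀ x, M.cell i x ⊆ M.mom w →
        M.dom i w (M.cell i z) (M.cell i x) → M.cell i x ⊆ T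
    · exact ⟨z, hzm, ⟨hdvz, hndzv⟩, Set.subset_inter hzS hzT,
        fun x hx hd => Set.subset_inter (hz3 x hx hd) (hall x hx hd)⟩
    · push_neg at hall
      obtain ⟨x, hxm, hdzx, hxT⟩ := hall
      obtain ⟨x', hx'm, ⟨hdxx', hndx'x⟩, hx'T, hx'3⟩ := hT x hxm hxT
      have hdzx' : M.dom i w (M.cell i z) (M.cell i x') := M.dom_trans hxm hdzx hdxx'
      have hx'S : M.cell i x' ⊆ S := hz3 x' hx'm hdzx'
      have hdvx' : M.dom i w (M.cell i v) (M.cell i x') := M.dom_trans hzm hdvz hdzx'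
      refine ⟨x', hx'm, ⟨hdvx', ?_⟩, Set.subset_inter hx'S hx'T, ?_⟩
      · intro hdx'v
        exact hndzv (M.dom_trans hx'm hdzx' hdx'v)
      · intro y hym hdx'y
        have hdzy : M.dom i w (M.cell i z) (M.cell i y) := M.dom_trans hx'm hdzx' hdx'y
        exact Set.subset_inter (hz3 y hym hdzy) (hx'3 y hym hdx'y)
  · obtain ⟨z', hz'm, ⟨hdzz', hndz'z⟩, hz'T, hz'3⟩ := hT z hzm hzT
    have hz'S : M.cell i z' ⊆ S := hz3 z' hz'm hdzz'
    have hdvz' : M.dom i w (M.cell i v) (M.cell i z') := M.dom_trans hzm hdvz hdzz'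
    refine ⟨z', hz'm, ⟨hdvz', ?_⟩, Set.subset_inter hz'S hz'T, ?_⟩
    · intro hdz'v
      exact hndzv (M.dom_trans hz'm hdzz' hdz'v)
    · intro y hym hdz'y
      have hdzy : M.dom i w (M.cell i z) (M.cell i y) := M.dom_trans hz'm hdzz' hdz'y
      exact Set.subset_inter (hz3 y hym hdzy) (hz'3 y hym hdz'y)

lemma Oc_inter (M : TUSModel Ag) {i : Ag} {w : M.W} {S T : Set M.W}
    (hS : M.Oc i w S) (hT : M.Oc i w T) : M.Oc i w (S ∩ T) := by
  intro v hv hvST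
  by_cases hvS : M.cell i v ⊆ S
  · have hvT : ¬ M.cell i v ⊆ T := fun h => hvST (Set.subset_inter hvS h)
    obtain ⟨z, h1, h2, h3, h4⟩ := M.Oc_inter_aux hT hS hv hvT
    exact ⟨z, h1, h2, by rwa [Set.inter_comm] at h3,
      fun x hx hd => by rw [Set.inter_comm]; exact h4 x hx hd⟩
  · exact M.Oc_inter_aux hS hT hv hvS

lemma dom_eq_of_rbox (M : TUSModel Ag) {i : Ag} {w u : M.W} (h : M.Rbox w u) :
    M.dom i w = M.dom i u := by
  funext A B
  unfold dom
  rw [M.mom_eq_of_rbox h]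

lemma Oc_congr_of_rbox (M : TUSModel Ag) {i : Ag} {w u : M.W} {S : Set M.W}
    (h : M.Rbox w u) : M.Oc i w S ↔ M.Oc i u S := by
  unfold Oc sdom
  rw [M.mom_eq_of_rbox h, M.dom_eq_of_rbox h]

/- Changing the valuation of a TUS-model. -/

def reval (M : TUSModel Ag) (v : ℕ → M.W → Prop) : TUSModel Ag :=
  { M with val := v }

lemma sat_reval (M : TUSModel Ag) (v : ℕ → M.W → Prop) :
    ∀ φ : Formula Ag, (∀ p, Formula.occurs p φ → ∀ x, v p x ↔ M.val p x) →
      ∀ w : M.W, (M.reval v).sat φ w ↔ M.sat φ w := by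
  intro φ
  induction φ with
  | var p => intro hv w; exact hv p rfl w
  | neg φ ih => intro hv w; exact not_congr (ih hv w)
  | and φ ψ ih1 ih2 =>
      intro hv w
      exact and_congr (ih1 (fun p hp => hv p (Or.inl hp)) w)
        (ih2 (fun p hp => hv p (Or.inr hp)) w)
  | box φ ih =>
      intro hv w
      exact forall_congr' fun u => imp_congr_right fun _ => ih hv u
  | agent i φ ih =>
      intro hv w
      exact forall_congr' fun u => imp_congr_right fun _ => ih hv u
  | coal φ ih =>
      intro hv w
      exact forall_congr' fun u => imp_congr_right fun _ => ih hv u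
  | G φ ih =>
      intro hv w
      exact forall_congr' fun u => imp_congr_right fun _ => ih hv u
  | H φ ih =>
      intro hv w
      exact forall_congr' fun u => imp_congr_right fun _ => ih hv u
  | obl i φ ih =>
      intro hv w
      have hs : {u : M.W | (M.reval v).sat φ u} = {u : M.W | M.sat φ u} :=
        Set.ext fun u => ih hv u
      show (M.reval v).Oc i w {u : M.W | (M.reval v).sat φ u} ↔
        M.Oc i w {u : M.W | M.sat φ u}
      exact iff_of_eq (congrArg (M.Oc i w) hs)

end TUSModel

end Soundness


/-- **Soundness of TDS with respect to utilitarian frames**: every theorem of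
TDS is valid on every TUS-model (with the dominance-based clause for ⊗_i). -/
theorem tus_soundness {Ag : Type} [Fintype Ag] [Nonempty Ag]
    (φ : Formula Ag) (h : Prv φ) :
    ∀ (M : TUSModel Ag) (w : M.W), M.sat φ w := by
  induction h with
  | taut h => intro M w; exact M.sat_of_tautology h w
  | kBox φ ψ =>
      intro M w
      rw [TUSModel.sat_impl]
      intro h1
      rw [TUSModel.sat_impl]
      intro h2 u hu
      exact (TUSModel.sat_impl M).mp (h1 u hu) (h2 u hu)
  | tBox φ =>
      intro M w
      rw [TUSModel.sat_impl]
      intro h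
      exact h w (M.frame.box_equiv.refl w)
  | fiveBox φ =>
      intro M w
      rw [TUSModel.sat_impl]
      intro h v hv
      rw [TUSModel.sat_diam] at h ⊢
      obtain ⟨u, hu, hs⟩ := h
      exact ⟨u, M.frame.box_equiv.trans (M.frame.box_equiv.symm hv) hu, hs⟩
  | kAg i φ ψ =>
      intro M w
      rw [TUSModel.sat_impl]
      intro h1
      rw [TUSModel.sat_impl]
      intro h2 u hu
      exact (TUSModel.sat_impl M).mp (h1 u hu) (h2 u hu)
  | tAg i φ =>
      intro M w
      rw [TUSModel.sat_impl]
      intro h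
      exact h w ((M.frame.ag_equiv i).refl w)
  | fiveAg i φ =>
      intro M w
      rw [TUSModel.sat_impl]
      intro h v hv
      rw [TUSModel.sat_diamAg] at h ⊢
      obtain ⟨u, hu, hs⟩ := h
      exact ⟨u, (M.frame.ag_equiv i).trans ((M.frame.ag_equiv i).symm hv) hu, hs⟩
  | kCoal φ ψ =>
      intro M w
      rw [TUSModel.sat_impl]
      intro h1
      rw [TUSModel.sat_impl]
      intro h2 u hu
      exact (TUSModel.sat_impl M).mp (h1 u hu) (h2 u hu)
  | tCoal φ =>
      intro M w
      rw [TUSModel.sat_impl]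
      intro h
      exact h w (M.frame.coal_equiv.refl w)
  | fiveCoal φ =>
      intro M w
      rw [TUSModel.sat_impl]
      intro h v hv
      rw [TUSModel.sat_diamCoal] at h ⊢
      obtain ⟨u, hu, hs⟩ := h
      exact ⟨u, M.frame.coal_equiv.trans (M.frame.coal_equiv.symm hv) hu, hs⟩
  | a10 φs =>
      intro M w
      rw [TUSModel.sat_impl]
      intro h
      rw [TUSModel.sat_bigAnd] at h
      have h' : ∀ i : Ag, ∃ u, M.Rbox w u ∧ ∀ x, M.Rag i u x → M.sat (φs i) x := by
        intro i
        have hmem : Formula.diam (Formula.agent i (φs i)) ∈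
            (agList Ag).map (fun i => Formula.diam (Formula.agent i (φs i))) :=
          List.mem_map_of_mem (a := i) (by simp [agList])
        have hd := h _ hmem
        rw [TUSModel.sat_diam] at hd
        obtain ⟨u, hu, hsat⟩ := hd
        exact ⟨u, hu, fun x hx => hsat x hx⟩
      choose u hu hsat using h'
      obtain ⟨y, hy⟩ := M.frame.c2 u
        (fun i j => M.frame.box_equiv.trans (M.frame.box_equiv.symm (hu i)) (hu j))
      rw [TUSModel.sat_diam]
      refine ⟨y, ?_, ?_⟩
      · obtain ⟨i⟩ := (inferInstance : Nonempty Ag)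
        exact M.frame.box_equiv.trans (hu i) (M.frame.c1 i (u i) y (hy i))
      · rw [TUSModel.sat_bigAnd]
        intro ψ hψ
        rw [List.mem_map] at hψ
        obtain ⟨i, _, rfl⟩ := hψ
        intro x hx
        exact hsat i x ((M.frame.ag_equiv i).trans (hy i) hx)
  | a11 φs =>
      intro M w
      rw [TUSModel.sat_impl]
      intro h
      rw [TUSModel.sat_bigAnd] at h
      intro v hv
      rw [TUSModel.sat_bigAnd]
      intro ψ hψ
      rw [List.mem_map] at hψ
      obtain ⟨i, _, rfl⟩ := hψ
      have hmem : Formula.agent i (φs i) ∈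
          (agList Ag).map (fun i => Formula.agent i (φs i)) :=
        List.mem_map_of_mem (a := i) (by simp [agList])
      exact h _ hmem v (M.frame.c3 w v hv i)
  | a12 i φ ψ =>
      intro M w
      rw [TUSModel.sat_impl]
      intro h1
      rw [TUSModel.sat_impl]
      intro h2
      rw [TUSModel.sat_obl] at h1 h2 ⊢
      have hsub : {u : M.W | M.sat (Formula.impl φ ψ) u} ∩ {u : M.W | M.sat φ u} ⊆
          {u : M.W | M.sat ψ u} := by
        rintro x ⟨hx1, hx2⟩
        exact (TUSModel.sat_impl M).mp hx1 hx2
      exact M.Oc_mono hsub (M.Oc_inter h1 h2)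
  | a13 i φ =>
      intro M w
      rw [TUSModel.sat_impl]
      intro h
      refine ⟨fun u hu => h u (M.frame.c1 i w u hu), ?_⟩
      rw [TUSModel.sat_obl]
      exact M.Oc_of_mom_subset fun x hx => h x hx
  | a14 i φ =>
      intro M w
      rw [TUSModel.sat_impl]
      intro h
      rw [TUSModel.sat_obl] at h
      rw [TUSModel.sat_diam]
      by_cases hw : M.cell i w ⊆ {u : M.W | M.sat φ u}
      · exact ⟨w, M.frame.box_equiv.refl w, fun x hx => hw hx⟩
      · obtain ⟨z, hzm, _, hzS, _⟩ := h w (M.cell_self_subset_mom i w) hw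
        exact ⟨z, hzm (M.mem_cell_self i z), fun x hx => hzS hx⟩
  | a15 i φ =>
      intro M w
      rw [TUSModel.sat_impl]
      intro h
      rw [TUSModel.sat_diam] at h
      obtain ⟨u, hu, hs⟩ := h
      intro v hv
      rw [TUSModel.sat_obl] at hs ⊢
      exact (M.Oc_congr_of_rbox
        (M.frame.box_equiv.trans (M.frame.box_equiv.symm hv) hu)).mpr hs
  | a16 i φ ψ =>
      intro M w
      rw [TUSModel.sat_impl]
      intro h
      rw [TUSModel.sat_impl]
      intro h2
      rw [TUSModel.sat_obl] at h2 ⊢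
      refine M.Oc_cellmono ?_ h2
      intro v hv hvφ x hx
      have hb : M.Rbox w v := hv (M.mem_cell_self i v)
      exact (TUSModel.sat_impl M).mp (h v hb) (fun y hy => hvφ hy) x hx
  | kG φ ψ =>
      intro M w
      rw [TUSModel.sat_impl]
      intro h1
      rw [TUSModel.sat_impl]
      intro h2 u hu
      exact (TUSModel.sat_impl M).mp (h1 u hu) (h2 u hu)
  | fourG φ =>
      intro M w
      rw [TUSModel.sat_impl]
      intro h u hu v huv
      exact h v (M.frame.g_trans w u v hu huv)
  | dG φ =>
      intro M w
      rw [TUSModel.sat_impl]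
      intro h
      rw [TUSModel.sat_F]
      obtain ⟨u, hu⟩ := M.frame.g_serial w
      exact ⟨u, hu, h u hu⟩
  | kH φ ψ =>
      intro M w
      rw [TUSModel.sat_impl]
      intro h1
      rw [TUSModel.sat_impl]
      intro h2 u hu
      exact (TUSModel.sat_impl M).mp (h1 u hu) (h2 u hu)
  | a21 φ =>
      intro M w
      rw [TUSModel.sat_impl]
      intro h u hu
      rw [TUSModel.sat_P]
      exact ⟨w, (M.frame.h_conv u w).mpr hu, h⟩
  | a22 φ =>
      intro M w
      rw [TUSModel.sat_impl]
      intro h u hu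
      rw [TUSModel.sat_F]
      exact ⟨w, (M.frame.h_conv w u).mp hu, h⟩
  | a23 φ =>
      intro M w
      rw [TUSModel.sat_impl]
      intro h
      rw [TUSModel.sat_F] at h
      obtain ⟨u, hu, hP⟩ := h
      rw [TUSModel.sat_P] at hP
      obtain ⟨v, hv, hφ⟩ := hP
      rw [TUSModel.sat_orf, TUSModel.sat_orf]
      rcases M.frame.t5 u w v ((M.frame.h_conv u w).mpr hu) hv with h1 | h1 | h1
      · left
        rw [TUSModel.sat_P]
        exact ⟨v, h1, hφ⟩
      · subst h1
        exact Or.inr (Or.inl hφ)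
      · right; right
        rw [TUSModel.sat_F]
        exact ⟨v, (M.frame.h_conv v w).mp h1, hφ⟩
  | a24 φ =>
      intro M w
      rw [TUSModel.sat_impl]
      intro h
      rw [TUSModel.sat_P] at h
      obtain ⟨u, hu, hF⟩ := h
      rw [TUSModel.sat_F] at hF
      obtain ⟨v, hv, hφ⟩ := hF
      rw [TUSModel.sat_orf, TUSModel.sat_orf]
      rcases M.frame.t4 u w v ((M.frame.h_conv w u).mp hu) hv with h1 | h1 | h1
      · right; right
        rw [TUSModel.sat_F]
        exact ⟨v, h1, hφ⟩
      · subst h1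
        exact Or.inr (Or.inl hφ)
      · left
        rw [TUSModel.sat_P]
        exact ⟨v, (M.frame.h_conv w v).mpr h1, hφ⟩
  | a25 φ =>
      intro M w
      rw [TUSModel.sat_impl]
      intro h
      rw [TUSModel.sat_F] at h
      obtain ⟨u, hu, hd⟩ := h
      rw [TUSModel.sat_diam] at hd
      obtain ⟨v, huv, hφ⟩ := hd
      obtain ⟨z, hz1, hz2⟩ := M.frame.t6 w u v hu huv
      rw [TUSModel.sat_diamCoal]
      refine ⟨z, hz1, ?_⟩
      rw [TUSModel.sat_F]
      exact ⟨v, hz2, hφ⟩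
  | mp h1 h2 ih1 ih2 =>
      intro M w
      exact (TUSModel.sat_impl M).mp (ih1 M w) (ih2 M w)
  | necBox h ih => intro M w; exact fun u _ => ih M u
  | necG h ih => intro M w; exact fun u _ => ih M u
  | necH h ih => intro M w; exact fun u _ => ih M u
  | @r2 φ p hocc hprem ih =>
      intro M w
      classical
      set nv : ℕ → M.W → Prop := fun q u =>
        if q = p then (∃ v : M.W, M.Rbox w v ∧ (M.RG v u ∨ M.RH v u))
        else M.val q u with hnvdef
      have hnvp : ∀ u : M.W, nv p u ↔ ∃ v : M.W, M.Rbox w v ∧ (M.RG v u ∨ M.RH v u) := by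
        intro u
        simp [hnvdef]
      have hagree : ∀ q, Formula.occurs q φ → ∀ x, nv q x ↔ M.val q x := by
        intro q hq x
        have hqp : ¬ q = p := fun hqp => hocc (hqp ▸ hq)
        simp [hnvdef, hqp]
      have hname : (M.reval nv).sat (Formula.nameF p) w := by
        refine ⟨?_, ?_⟩
        · intro u hu hmem
          obtain ⟨v', hv', hGH⟩ := (hnvp u).mp hmem
          rcases hGH with hG | hH
          · exact M.frame.t7 v' u
              (M.frame.box_equiv.trans (M.frame.box_equiv.symm hv') hu) hG
          · exact M.frame.t7 u v'
              (M.frame.box_equiv.trans (M.frame.box_equiv.symm hu) hv')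
              ((M.frame.h_conv v' u).mp hH)
        · intro u hu
          refine ⟨?_, ?_⟩
          · intro x hx
            exact (hnvp x).mpr ⟨u, hu, Or.inl hx⟩
          · intro x hx
            exact (hnvp x).mpr ⟨u, hu, Or.inr hx⟩
      have hφ' := (TUSModel.sat_impl (M.reval nv)).mp (ih (M.reval nv) w) hname
      exact (M.sat_reval nv φ hagree w).mp hφ'
end

section
/- Validity transfer from neutral to utilitarian frames: for every formula φ ∈ L_TDS, if φ is valid on every TDS-model, then φ is valid on every TUS-model. -/
/-! ## Auxiliary development for the transfer theorem -/

section Transfer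

open Classical

/-- The list of subformulas of a formula (including itself). -/
def subfm {Ag : Type} : Formula Ag → List (Formula Ag)
  | .var p => [.var p]
  | .neg ψ => .neg ψ :: subfm ψ
  | .and ψ χ => .and ψ χ :: (subfm ψ ++ subfm χ)
  | .box ψ => .box ψ :: subfm ψ
  | .agent i ψ => .agent i ψ :: subfm ψ
  | .coal ψ => .coal ψ :: subfm ψ
  | .G ψ => .G ψ :: subfm ψ
  | .H ψ => .H ψ :: subfm ψ
  | .obl i ψ => .obl i ψ :: subfm ψ

lemma self_mem_subfm {Ag : Type} (φ : Formula Ag) : φ ∈ subfm φ := by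
  cases φ <;> simp [subfm]

lemma subfm_trans {Ag : Type} : ∀ φ ψ : Formula Ag, ψ ∈ subfm φ → subfm ψ ⊆ subfm φ := by
  intro φ
  induction φ with
  | var p =>
      intro ψ h
      simp [subfm] at h
      subst h; simp [subfm]
  | and χ₁ χ₂ ih1 ih2 =>
      intro ψ h
      rcases List.mem_cons.1 h with rfl | h
      · exact fun x hx => hx
      · rcases List.mem_append.1 h with h | h
        · exact fun x hx => List.mem_cons_of_mem _ (List.mem_append.2 (Or.inl (ih1 ψ h hx)))
        · exact fun x hx => List.mem_cons_of_mem _ (List.mem_append.2 (Or.inr (ih2 ψ h hx)))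
  | neg χ ih =>
      intro ψ h
      rcases List.mem_cons.1 h with rfl | h
      · exact fun x hx => hx
      · exact fun x hx => List.mem_cons_of_mem _ (ih ψ h hx)
  | box χ ih =>
      intro ψ h
      rcases List.mem_cons.1 h with rfl | h
      · exact fun x hx => hx
      · exact fun x hx => List.mem_cons_of_mem _ (ih ψ h hx)
  | agent i χ ih =>
      intro ψ h
      rcases List.mem_cons.1 h with rfl | h
      · exact fun x hx => hx
      · exact fun x hx => List.mem_cons_of_mem _ (ih ψ h hx)
  | coal χ ih =>
      intro ψ h
      rcases List.mem_cons.1 h with rfl | h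
      · exact fun x hx => hx
      · exact fun x hx => List.mem_cons_of_mem _ (ih ψ h hx)
  | G χ ih =>
      intro ψ h
      rcases List.mem_cons.1 h with rfl | h
      · exact fun x hx => hx
      · exact fun x hx => List.mem_cons_of_mem _ (ih ψ h hx)
  | H χ ih =>
      intro ψ h
      rcases List.mem_cons.1 h with rfl | h
      · exact fun x hx => hx
      · exact fun x hx => List.mem_cons_of_mem _ (ih ψ h hx)
  | obl i χ ih =>
      intro ψ h
      rcases List.mem_cons.1 h with rfl | h
      · exact fun x hx => hx
      · exact fun x hx => List.mem_cons_of_mem _ (ih ψ h hx)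

variable {Ag : Type} [Fintype Ag]

/-- The truth clause of `⊗_i` as a predicate on sets. -/
def clauseP (M : TUSModel Ag) (i : Ag) (w : M.W) (A : Set M.W) : Prop :=
  ∀ v : M.W, M.cell i v ⊆ M.mom w → ¬ (M.cell i v ⊆ A) →
    ∃ z : M.W, M.cell i z ⊆ M.mom w ∧
      M.sdom i w (M.cell i v) (M.cell i z) ∧
      M.cell i z ⊆ A ∧
      ∀ x : M.W, M.cell i x ⊆ M.mom w →
        M.dom i w (M.cell i z) (M.cell i x) → M.cell i x ⊆ A

lemma sat_obl_iff (M : TUSModel Ag) (i : Ag) (ψ : Formula Ag) (w : M.W) :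
    M.sat (.obl i ψ) w ↔ clauseP M i w {u | M.sat ψ u} := Iff.rfl

namespace TransferAux

variable {M : TUSModel Ag}

lemma mem_cell_self (i : Ag) (v : M.W) : v ∈ M.cell i v := (M.frame.ag_equiv i).refl v

lemma cell_eq_of_mem {i : Ag} {v u : M.W} (h : u ∈ M.cell i v) :
    M.cell i u = M.cell i v := by
  ext x
  exact ⟨fun hx => (M.frame.ag_equiv i).trans h hx,
    fun hx => (M.frame.ag_equiv i).trans ((M.frame.ag_equiv i).symm h) hx⟩

lemma mem_state_self (i : Ag) (x : M.W) : x ∈ M.state i x :=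
  fun k _ => (M.frame.ag_equiv k).refl x

lemma mom_eq {a b : M.W} (h : M.Rbox a b) : M.mom a = M.mom b := by
  ext x
  exact ⟨fun hx => M.frame.box_equiv.trans (M.frame.box_equiv.symm h) hx,
    fun hx => M.frame.box_equiv.trans h hx⟩

lemma dom_trans {i : Ag} {w : M.W} {a b c : M.W}
    (hb : M.cell i b ⊆ M.mom w)
    (h1 : M.dom i w (M.cell i a) (M.cell i b))
    (h2 : M.dom i w (M.cell i b) (M.cell i c)) :
    M.dom i w (M.cell i a) (M.cell i c) := by
  intro x hx p hp r hr
  classical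
  have hbw : M.Rbox w b := hb (mem_cell_self i b)
  have hxw : M.Rbox w x := hx (mem_state_self i x)
  set u : Ag → M.W := fun k => if k = i then b else x with hu
  have huw : ∀ k, M.Rbox w (u k) := by
    intro k
    by_cases hk : k = i <;> simp [hu, hk, hbw, hxw]
  have hpair : ∀ j k, M.Rbox (u j) (u k) := fun j k =>
    M.frame.box_equiv.trans (M.frame.box_equiv.symm (huw j)) (huw k)
  obtain ⟨y, hy⟩ := M.frame.c2 u hpair
  have hyb : y ∈ M.cell i b := by have := hy i; exact (by simpa [hu] using this : M.Rag i b y)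
  have hys : y ∈ M.state i x := by
    intro k hk
    have := hy k
    simpa [hu, hk] using this
  exact le_trans (h1 x hx p hp y ⟨hyb, hys⟩) (h2 x hx y ⟨hyb, hys⟩ r hr)

lemma clause_univ (i : Ag) (w : M.W) : clauseP M i w Set.univ :=
  fun _ _ hv => absurd (Set.subset_univ _) hv

lemma clause_mono {i : Ag} {w : M.W} {A B : Set M.W}
    (hA : clauseP M i w A) (hAB : A ⊆ B) : clauseP M i w B := by
  intro v hv hvB
  have hvA : ¬ M.cell i v ⊆ A := fun h => hvB (h.trans hAB)
  obtain ⟨z, hzm, hsd, hzA, hup⟩ := hA v hv hvA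
  exact ⟨z, hzm, hsd, hzA.trans hAB, fun x hx hd => (hup x hx hd).trans hAB⟩

lemma clause_inter_aux {i : Ag} {w : M.W} {A B : Set M.W}
    (hA : clauseP M i w A) (hB : clauseP M i w B) :
    ∀ v : M.W, M.cell i v ⊆ M.mom w → ¬ (M.cell i v ⊆ A) →
      ∃ z : M.W, M.cell i z ⊆ M.mom w ∧
        M.sdom i w (M.cell i v) (M.cell i z) ∧
        M.cell i z ⊆ A ∩ B ∧
        ∀ x : M.W, M.cell i x ⊆ M.mom w →
          M.dom i w (M.cell i z) (M.cell i x) → M.cell i x ⊆ A ∩ B := by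
  intro v hv hvA
  obtain ⟨z1, hz1m, hsd1, hz1A, hup1⟩ := hA v hv hvA
  by_cases hgood : M.cell i z1 ⊆ B ∧
      ∀ x : M.W, M.cell i x ⊆ M.mom w → M.dom i w (M.cell i z1) (M.cell i x) →
        M.cell i x ⊆ B
  · exact ⟨z1, hz1m, hsd1, Set.subset_inter hz1A hgood.1,
      fun x hx hd => Set.subset_inter (hup1 x hx hd) (hgood.2 x hx hd)⟩
  · -- there is a cell `x0` equal to or dominating `z1` that is not inside `B`
    have hx0 : ∃ x0 : M.W, M.cell i x0 ⊆ M.mom w ∧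
        (x0 = z1 ∨ M.dom i w (M.cell i z1) (M.cell i x0)) ∧
        ¬ M.cell i x0 ⊆ B := by
      by_cases hz1B : M.cell i z1 ⊆ B
      · push_neg at hgood
        obtain ⟨x, hx1, hx2, hx3⟩ := hgood hz1B
        exact ⟨x, hx1, Or.inr hx2, hx3⟩
      · exact ⟨z1, hz1m, Or.inl rfl, hz1B⟩
    obtain ⟨x0, hx0m, hx0rel, hx0B⟩ := hx0
    obtain ⟨z2, hz2m, hsd2, hz2B, hup2⟩ := hB x0 hx0m hx0B
    have hd12 : M.dom i w (M.cell i z1) (M.cell i z2) := by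
      rcases hx0rel with rfl | hd
      · exact hsd2.1
      · exact dom_trans hx0m hd hsd2.1
    have hz2A : M.cell i z2 ⊆ A := hup1 z2 hz2m hd12
    refine ⟨z2, hz2m, ⟨dom_trans hz1m hsd1.1 hd12, ?_⟩,
      Set.subset_inter hz2A hz2B, ?_⟩
    · intro hc
      exact hsd1.2 (dom_trans hz2m hd12 hc)
    · intro x hx hd
      exact Set.subset_inter (hup1 x hx (dom_trans hz2m hd12 hd)) (hup2 x hx hd)

lemma clause_inter {i : Ag} {w : M.W} {A B : Set M.W}
    (hA : clauseP M i w A) (hB : clauseP M i w B) : clauseP M i w (A ∩ B) := by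
  intro v hv hvAB
  by_cases hvA : M.cell i v ⊆ A
  · have hvB : ¬ M.cell i v ⊆ B := fun h => hvAB (Set.subset_inter hvA h)
    obtain ⟨z, hzm, hsd, hzBA, hup⟩ := clause_inter_aux hB hA v hv hvB
    exact ⟨z, hzm, hsd, fun u hu => ⟨(hzBA hu).2, (hzBA hu).1⟩,
      fun x hx hd u hu => ⟨(hup x hx hd hu).2, (hup x hx hd hu).1⟩⟩
  · obtain ⟨z, hzm, hsd, hzAB, hup⟩ := clause_inter_aux hA hB v hv hvA
    exact ⟨z, hzm, hsd, hzAB, hup⟩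

lemma clause_foldr (i : Ag) (w : M.W) :
    ∀ L : List (Set M.W), (∀ A ∈ L, clauseP M i w A) →
      clauseP M i w (L.foldr (· ∩ ·) Set.univ)
  | [], _ => clause_univ i w
  | A :: L, h =>
      clause_inter (h A List.mem_cons_self)
        (clause_foldr i w L fun B hB => h B (List.mem_cons_of_mem _ hB))

lemma foldr_inter_subset {α : Type*} {L : List (Set α)} {A : Set α} (h : A ∈ L) :
    L.foldr (· ∩ ·) Set.univ ⊆ A := by
  induction L with
  | nil => cases h
  | cons B L ih =>
      rcases List.mem_cons.1 h with rfl | h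
      · exact Set.inter_subset_left
      · exact Set.inter_subset_right.trans (ih h)

lemma subset_foldr_inter {α : Type*} {L : List (Set α)} {X : Set α}
    (h : ∀ A ∈ L, X ⊆ A) : X ⊆ L.foldr (· ∩ ·) Set.univ := by
  induction L with
  | nil => exact Set.subset_univ X
  | cons B L ih =>
      exact Set.subset_inter (h B List.mem_cons_self)
        (ih fun A hA => h A (List.mem_cons_of_mem _ hA))

lemma clauseP_congr {a b : M.W} (h : M.Rbox a b) (i : Ag) (A : Set M.W) :
    clauseP M i a A ↔ clauseP M i b A := by
  have hm : M.mom a = M.mom b := mom_eq h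
  have hd : M.dom i a = M.dom i b := by unfold TUSModel.dom; rw [hm]
  have hs : M.sdom i a = M.sdom i b := by unfold TUSModel.sdom; rw [hd]
  unfold clauseP
  rw [hm, hd, hs]

end TransferAux

open TransferAux

/-- The deontic relation induced on a TUS-model by the finitely many
subformulas of `φ₀`. -/
def OblR (M : TUSModel Ag) (φ₀ : Formula Ag) (i : Ag) (w u : M.W) : Prop :=
  M.Rbox w u ∧ ∀ ψ ∈ subfm φ₀, clauseP M i w {x | M.sat ψ x} →
    M.cell i u ⊆ {x | M.sat ψ x}

/-- Intersection of the extensions of the "obligation-satisfiable" subformulas. -/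
noncomputable def Cset (M : TUSModel Ag) (φ₀ : Formula Ag) (i : Ag) (w : M.W) :
    Set M.W :=
  ((subfm φ₀).map (fun ψ =>
      if clauseP M i w {x | M.sat ψ x} then {x | M.sat ψ x} else Set.univ)).foldr
    (· ∩ ·) Set.univ

section Main

variable {M : TUSModel Ag} {φ₀ : Formula Ag}

lemma clause_Cset (i : Ag) (w : M.W) : clauseP M i w (Cset M φ₀ i w) := by
  apply clause_foldr
  intro A hA
  obtain ⟨ψ, _, rfl⟩ := List.mem_map.1 hA
  by_cases h : clauseP M i w {x | M.sat ψ x}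
  · simpa [h] using h
  · simpa [h] using clause_univ (M := M) i w

lemma Cset_subset {i : Ag} {w : M.W} {ψ : Formula Ag} (hψ : ψ ∈ subfm φ₀)
    (hcl : clauseP M i w {x | M.sat ψ x}) : Cset M φ₀ i w ⊆ {x | M.sat ψ x} := by
  have hmem : {x | M.sat ψ x} ∈ ((subfm φ₀).map (fun ψ =>
      if clauseP M i w {x | M.sat ψ x} then {x | M.sat ψ x} else Set.univ)) := by
    refine List.mem_map.2 ⟨ψ, hψ, ?_⟩
    simp [hcl]
  exact foldr_inter_subset hmem

lemma subset_Cset {i : Ag} {w : M.W} {X : Set M.W}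
    (h : ∀ ψ ∈ subfm φ₀, clauseP M i w {x | M.sat ψ x} → X ⊆ {x | M.sat ψ x}) :
    X ⊆ Cset M φ₀ i w := by
  apply subset_foldr_inter
  intro A hA
  obtain ⟨ψ, hψ, rfl⟩ := List.mem_map.1 hA
  by_cases hcl : clauseP M i w {x | M.sat ψ x}
  · simpa [hcl] using h ψ hψ hcl
  · simp [hcl]

lemma cell_sub_OblR {i : Ag} {w x : M.W} (hxm : M.cell i x ⊆ M.mom w)
    (hxC : M.cell i x ⊆ Cset M φ₀ i w) :
    M.cell i x ⊆ {u | OblR M φ₀ i w u} := by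
  intro u hu
  refine ⟨hxm hu, fun ψ hψ hcl => ?_⟩
  have : M.cell i u ⊆ Cset M φ₀ i w := by
    rw [cell_eq_of_mem hu]; exact hxC
  exact this.trans (Cset_subset hψ hcl)

lemma clause_OblR (i : Ag) (w : M.W) :
    clauseP M i w {u | OblR M φ₀ i w u} := by
  intro v hv hvO
  have hvC : ¬ M.cell i v ⊆ Cset M φ₀ i w := fun hsub =>
    hvO (cell_sub_OblR hv hsub)
  obtain ⟨z, hzm, hsd, hzC, hup⟩ := clause_Cset i w v hv hvC
  exact ⟨z, hzm, hsd, cell_sub_OblR hzm hzC,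
    fun x hx hd => cell_sub_OblR hx (hup x hx hd)⟩

lemma OblR_iff {i : Ag} {w : M.W} {ψ : Formula Ag} (hψ : ψ ∈ subfm φ₀) :
    ({u | OblR M φ₀ i w u} ⊆ {x | M.sat ψ x}) ↔ clauseP M i w {x | M.sat ψ x} :=
  ⟨fun h => clause_mono (clause_OblR i w) h,
   fun h u hu => hu.2 ψ hψ h (mem_cell_self i u)⟩

lemma OblR_d8 (i : Ag) (w v : M.W) (h : OblR M φ₀ i w v) : M.Rbox w v := h.1

lemma OblR_d9 (i : Ag) (w : M.W) :
    ∃ v : M.W, M.Rbox w v ∧ ∀ u : M.W, M.Rag i v u → OblR M φ₀ i w u := by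
  by_cases h : M.cell i w ⊆ {u | OblR M φ₀ i w u}
  · exact ⟨w, M.frame.box_equiv.refl w, fun u hu => h hu⟩
  · have hvm : M.cell i w ⊆ M.mom w := fun u hu => M.frame.c1 i w u hu
    obtain ⟨z, hzm, _, hzO, _⟩ := clause_OblR (φ₀ := φ₀) i w w hvm h
    exact ⟨z, hzm (mem_cell_self i z), fun u hu => hzO hu⟩

lemma OblR_d10 (i : Ag) (w v u z : M.W) (hwv : M.Rbox w v) (hwu : M.Rbox w u)
    (h : OblR M φ₀ i u z) : OblR M φ₀ i v z := by
  have huv : M.Rbox u v := M.frame.box_equiv.trans (M.frame.box_equiv.symm hwu) hwv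
  exact ⟨M.frame.box_equiv.trans (M.frame.box_equiv.symm huv) h.1,
    fun ψ hψ hcl => h.2 ψ hψ ((clauseP_congr huv i _).2 hcl)⟩

lemma OblR_d11 (i : Ag) (w v : M.W) (h : OblR M φ₀ i w v) :
    ∃ u : M.W, M.Rbox w u ∧ M.Rag i u v ∧
      ∀ z : M.W, M.Rag i u z → OblR M φ₀ i w z := by
  refine ⟨v, h.1, (M.frame.ag_equiv i).refl v, fun z hz => ?_⟩
  refine ⟨M.frame.box_equiv.trans h.1 (M.frame.c1 i v z hz), fun ψ hψ hcl => ?_⟩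
  rw [cell_eq_of_mem (show z ∈ M.cell i v from hz)]
  exact h.2 ψ hψ hcl

end Main

/-- The TDS-model induced by a TUS-model together with a target formula. -/
noncomputable def TUSModel.toTDS (M : TUSModel Ag) (φ₀ : Formula Ag) : TDSModel Ag where
  W := M.W
  Rbox := M.Rbox
  Rag := M.Rag
  Rcoal := M.Rcoal
  RG := M.RG
  RH := M.RH
  Robl := OblR M φ₀
  val := M.val
  frame :=
    { nonempty := M.frame.nonempty
      box_equiv := M.frame.box_equiv
      ag_equiv := M.frame.ag_equiv
      coal_equiv := M.frame.coal_equiv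
      c1 := M.frame.c1
      c2 := M.frame.c2
      c3 := M.frame.c3
      g_trans := M.frame.g_trans
      g_serial := M.frame.g_serial
      h_conv := M.frame.h_conv
      t4 := M.frame.t4
      t5 := M.frame.t5
      t6 := M.frame.t6
      t7 := M.frame.t7
      d8 := OblR_d8
      d9 := OblR_d9
      d10 := OblR_d10
      d11 := OblR_d11 }

lemma sat_toTDS (M : TUSModel Ag) (φ₀ : Formula Ag) :
    ∀ ψ : Formula Ag, ψ ∈ subfm φ₀ → ∀ w : M.W,
      ((M.toTDS φ₀).sat ψ w ↔ M.sat ψ w) := by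
  intro ψ
  induction ψ with
  | var p => intro _ w; exact Iff.rfl
  | neg χ ih =>
      intro h w
      have hχ : χ ∈ subfm φ₀ :=
        subfm_trans φ₀ _ h (List.mem_cons_of_mem _ (self_mem_subfm χ))
      exact not_congr (ih hχ w)
  | and χ₁ χ₂ ih1 ih2 =>
      intro h w
      have h1 : χ₁ ∈ subfm φ₀ := subfm_trans φ₀ _ h
        (List.mem_cons_of_mem _ (List.mem_append.2 (Or.inl (self_mem_subfm χ₁))))
      have h2 : χ₂ ∈ subfm φ₀ := subfm_trans φ₀ _ h
        (List.mem_cons_of_mem _ (List.mem_append.2 (Or.inr (self_mem_subfm χ₂))))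
      exact and_congr (ih1 h1 w) (ih2 h2 w)
  | box χ ih =>
      intro h w
      have hχ : χ ∈ subfm φ₀ :=
        subfm_trans φ₀ _ h (List.mem_cons_of_mem _ (self_mem_subfm χ))
      exact forall_congr' fun u => imp_congr Iff.rfl (ih hχ u)
  | agent i χ ih =>
      intro h w
      have hχ : χ ∈ subfm φ₀ :=
        subfm_trans φ₀ _ h (List.mem_cons_of_mem _ (self_mem_subfm χ))
      exact forall_congr' fun u => imp_congr Iff.rfl (ih hχ u)
  | coal χ ih =>
      intro h w
      have hχ : χ ∈ subfm φ₀ :=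
        subfm_trans φ₀ _ h (List.mem_cons_of_mem _ (self_mem_subfm χ))
      exact forall_congr' fun u => imp_congr Iff.rfl (ih hχ u)
  | G χ ih =>
      intro h w
      have hχ : χ ∈ subfm φ₀ :=
        subfm_trans φ₀ _ h (List.mem_cons_of_mem _ (self_mem_subfm χ))
      exact forall_congr' fun u => imp_congr Iff.rfl (ih hχ u)
  | H χ ih =>
      intro h w
      have hχ : χ ∈ subfm φ₀ :=
        subfm_trans φ₀ _ h (List.mem_cons_of_mem _ (self_mem_subfm χ))
      exact forall_congr' fun u => imp_congr Iff.rfl (ih hχ u)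
  | obl i χ ih =>
      intro h w
      have hχ : χ ∈ subfm φ₀ :=
        subfm_trans φ₀ _ h (List.mem_cons_of_mem _ (self_mem_subfm χ))
      have hset : {u : M.W | M.sat χ u} = {u : M.W | (M.toTDS φ₀).sat χ u} := by
        ext u; exact (ih hχ u).symm
      constructor
      · intro hN
        show clauseP M i w {u | M.sat χ u}
        refine (OblR_iff hχ).1 ?_
        intro u hu
        exact (ih hχ u).1 (hN u hu)
      · intro hM u hu
        have hcl : clauseP M i w {u | M.sat χ u} := hM
        have := hu.2 χ hχ hcl (mem_cell_self i u)
        exact (ih hχ u).2 this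

end Transfer

/-- **Validity transfer from neutral to utilitarian frames**: every formula
valid on all TDS-models is valid on all TUS-models. -/
theorem tds_valid_implies_tus_valid {Ag : Type} [Fintype Ag] [Nonempty Ag]
    (φ : Formula Ag)
    (h : ∀ (M : TDSModel Ag) (w : M.W), M.sat φ w) :
    ∀ (M : TUSModel Ag) (w : M.W), M.sat φ w := by
  intro M w
  exact (sat_toTDS M φ φ (self_mem_subfm φ) w).1 (h (M.toTDS φ) w)
end
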